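/- Let n ≥ 2 be an integer. Let p, q, z be points of ℝ² whose coordinates are integers lying in the interval [0, n]. If p ≠ q and z does not lie on the (affine) line through p and q, then the Euclidean distance from z to the line through p and q is at least (2n² − 2n + 1)^(−1/2). -/

import Mathlib

/-- Key integer inequality. -/
lemma point_line_grid_key (n d0 d1 w0 w1 : ℤ) (hn : 2 ≤ n)
    (h0 : d0 ^ 2 ≤ n ^ 2) (h1 : d1 ^ 2 ≤ n ^ 2)
    (hD : d0 * w1 - d1 * w0 ≠ 0) :
    d0 ^ 2 + d1 ^ 2 ≤ (d0 * w1 - d1 * w0) ^ 2 * (2 * n ^ 2 - 2 * n + 1) := by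
  set D : ℤ := d0 * w1 - d1 * w0 with hDdef
  have hD1 : 1 ≤ D ^ 2 := by
    have := Int.one_le_abs hD
    nlinarith [sq_abs D]
  by_cases hS : d0 ^ 2 + d1 ^ 2 ≤ 2 * n ^ 2 - 2 * n + 1
  · nlinarith
  · push_neg at hS
    have hd0 : d0 ^ 2 = n ^ 2 := by
      by_contra h
      have h0' : d0 ^ 2 ≤ (n - 1) ^ 2 := by
        have hlt : d0 ^ 2 < n ^ 2 := lt_of_le_of_ne h0 h
        have habs : |d0| < n := by nlinarith [sq_abs d0, abs_nonneg d0]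
        nlinarith [sq_abs d0, abs_nonneg d0]
      nlinarith
    have hd1 : d1 ^ 2 = n ^ 2 := by
      by_contra h
      have h1' : d1 ^ 2 ≤ (n - 1) ^ 2 := by
        have hlt : d1 ^ 2 < n ^ 2 := lt_of_le_of_ne h1 h
        have habs : |d1| < n := by nlinarith [sq_abs d1, abs_nonneg d1]
        nlinarith [sq_abs d1, abs_nonneg d1]
      nlinarith
    have hdvd : n ∣ D := by
      rcases mul_eq_zero.mp (show (d0 - n) * (d0 + n) = 0 by nlinarith) with h | h <;>
      rcases mul_eq_zero.mp (show (d1 - n) * (d1 + n) = 0 by nlinarith) with h' | h'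
      · exact ⟨w1 - w0, by rw [hDdef, show d0 = n by linarith, show d1 = n by linarith]; ring⟩
      · exact ⟨w1 + w0, by rw [hDdef, show d0 = n by linarith, show d1 = -n by linarith]; ring⟩
      · exact ⟨-w1 - w0, by rw [hDdef, show d0 = -n by linarith, show d1 = n by linarith]; ring⟩
      · exact ⟨-w1 + w0, by rw [hDdef, show d0 = -n by linarith, show d1 = -n by linarith]; ring⟩
    have hnD : n ≤ |D| := Int.le_of_dvd (abs_pos.mpr hD) ((dvd_abs _ _).mpr hdvd)
    have hD2 : n ^ 2 ≤ D ^ 2 := by nlinarith [sq_abs D, abs_nonneg D]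
    have hMpos : (0 : ℤ) ≤ 2 * n ^ 2 - 2 * n + 1 := by nlinarith
    have : n ^ 2 * (2 * n ^ 2 - 2 * n + 1) ≤ D ^ 2 * (2 * n ^ 2 - 2 * n + 1) :=
      mul_le_mul_of_nonneg_right hD2 hMpos
    nlinarith

set_option maxHeartbeats 1000000 in
/-- **Lemma 4 (lower bound).** In an `n × n` grid (`n ≥ 2`), the distance from a grid
point `z` not on the line `l` through two distinct grid points `p, q` is at least
`(2n² - 2n + 1)^(-1/2)`. -/
theorem point_line_grid_dist_lower_bound (n : ℕ) (hn : 2 ≤ n)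
    (p q z : EuclideanSpace ℝ (Fin 2))
    (hp : ∀ i, ∃ k : ℤ, 0 ≤ k ∧ k ≤ (n : ℤ) ∧ p i = (k : ℝ))
    (hq : ∀ i, ∃ k : ℤ, 0 ≤ k ∧ k ≤ (n : ℤ) ∧ q i = (k : ℝ))
    (hz : ∀ i, ∃ k : ℤ, 0 ≤ k ∧ k ≤ (n : ℤ) ∧ z i = (k : ℝ))
    (hpq : p ≠ q)
    (hzl : z ∉ affineSpan ℝ ({p, q} : Set (EuclideanSpace ℝ (Fin 2)))) :
    Metric.infDist z (affineSpan ℝ ({p, q} : Set (EuclideanSpace ℝ (Fin 2))) : Set (EuclideanSpace ℝ (Fin 2)))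
      ≥ (Real.sqrt (2 * (n : ℝ) ^ 2 - 2 * n + 1))⁻¹ := by
  obtain ⟨a0, ha00, ha0n, ha0⟩ := hp 0
  obtain ⟨a1, ha10, ha1n, ha1⟩ := hp 1
  obtain ⟨b0, hb00, hb0n, hb0⟩ := hq 0
  obtain ⟨b1, hb10, hb1n, hb1⟩ := hq 1
  obtain ⟨c0, hc00, hc0n, hc0⟩ := hz 0
  obtain ⟨c1, hc10, hc1n, hc1⟩ := hz 1
  set d0 : ℤ := b0 - a0 with hd0def
  set d1 : ℤ := b1 - a1 with hd1def
  set w0 : ℤ := c0 - a0 with hw0def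
  set w1 : ℤ := c1 - a1 with hw1def
  set D : ℤ := d0 * w1 - d1 * w0 with hDdef
  -- a helper to turn membership into a parametrization
  have hmem : ∀ y, y ∈ affineSpan ℝ ({p, q} : Set (EuclideanSpace ℝ (Fin 2))) →
      ∃ r : ℝ, ∀ i, y i = r * (q i - p i) + p i := by
    intro y hy
    have : (y -ᵥ p) +ᵥ p ∈ affineSpan ℝ ({p, q} : Set (EuclideanSpace ℝ (Fin 2))) := by
      simpa using hy
    obtain ⟨r, hr⟩ := vadd_left_mem_affineSpan_pair.mp this
    refine ⟨r, fun i => ?_⟩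
    have := congrArg (fun v => v i) hr
    simp only [PiLp.smul_apply, PiLp.sub_apply, smul_eq_mul] at this
    have : r * (q i - p i) = y i - p i := this
    linarith
  have hDne : D ≠ 0 := by
    intro hD0
    have hd : d0 ≠ 0 ∨ d1 ≠ 0 := by
      by_contra h
      push_neg at h
      apply hpq
      ext i
      fin_cases i
      · show p 0 = q 0
        rw [ha0, hb0]; norm_num; omega
      · show p 1 = q 1
        rw [ha1, hb1]; norm_num; omega
    apply hzl
    have key : ∀ r : ℝ, (∀ i, z i = r * (q i - p i) + p i) →
        z ∈ affineSpan ℝ ({p, q} : Set (EuclideanSpace ℝ (Fin 2))) := by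
      intro r hr
      have hz' : z = r • (q -ᵥ p) +ᵥ p := by
        ext i
        have := hr i
        simpa [PiLp.smul_apply, PiLp.sub_apply, PiLp.add_apply, vadd_eq_add, vsub_eq_sub] using this
      rw [hz']
      exact smul_vsub_vadd_mem_affineSpan_pair r p q
    rcases hd with h | h
    · refine key ((w0 : ℝ) / (d0 : ℝ)) fun i => ?_
      have hd0R : (d0 : ℝ) ≠ 0 := Int.cast_ne_zero.mpr h
      fin_cases i
      · show z 0 = (w0 : ℝ) / (d0 : ℝ) * (q 0 - p 0) + p 0
        rw [hc0, ha0, hb0]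
        field_simp
        push_cast [hw0def, hd0def]
        ring
      · show z 1 = (w0 : ℝ) / (d0 : ℝ) * (q 1 - p 1) + p 1
        rw [hc1, ha1, hb1]
        have hDR : (d0 : ℝ) * w1 = (d1 : ℝ) * w0 := by
          have : (D : ℝ) = 0 := by rw [hD0]; norm_num
          push_cast [hDdef] at this
          linarith
        field_simp
        push_cast [hw0def, hw1def, hd0def, hd1def] at hDR ⊢
        nlinarith [hDR]
    · refine key ((w1 : ℝ) / (d1 : ℝ)) fun i => ?_
      have hd1R : (d1 : ℝ) ≠ 0 := Int.cast_ne_zero.mpr h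
      fin_cases i
      · show z 0 = (w1 : ℝ) / (d1 : ℝ) * (q 0 - p 0) + p 0
        rw [hc0, ha0, hb0]
        have hDR : (d0 : ℝ) * w1 = (d1 : ℝ) * w0 := by
          have : (D : ℝ) = 0 := by rw [hD0]; norm_num
          push_cast [hDdef] at this
          linarith
        field_simp
        push_cast [hw0def, hw1def, hd0def, hd1def] at hDR ⊢
        nlinarith [hDR]
      · show z 1 = (w1 : ℝ) / (d1 : ℝ) * (q 1 - p 1) + p 1
        rw [hc1, ha1, hb1]
        field_simp
        push_cast [hw1def, hd1def]
        ring
  -- key integer inequality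
  have h0 : d0 ^ 2 ≤ (n : ℤ) ^ 2 := by nlinarith
  have h1 : d1 ^ 2 ≤ (n : ℤ) ^ 2 := by nlinarith
  have hkey : d0 ^ 2 + d1 ^ 2 ≤ D ^ 2 * (2 * (n : ℤ) ^ 2 - 2 * n + 1) :=
    point_line_grid_key n d0 d1 w0 w1 (by exact_mod_cast hn) h0 h1 hDne
  have hS1 : (1 : ℤ) ≤ d0 ^ 2 + d1 ^ 2 := by
    have hd : d0 ≠ 0 ∨ d1 ≠ 0 := by
      by_contra h
      push_neg at h
      apply hDne
      rw [hDdef, h.1, h.2]; ring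
    rcases hd with h | h
    · have := pow_two_pos_of_ne_zero h
      have := sq_nonneg d1
      omega
    · have := pow_two_pos_of_ne_zero h
      have := sq_nonneg d0
      omega
  -- real versions
  have hnR : (2 : ℝ) ≤ (n : ℝ) := by exact_mod_cast hn
  have hM : (0 : ℝ) < 2 * (n : ℝ) ^ 2 - 2 * n + 1 := by nlinarith
  set M : ℝ := 2 * (n : ℝ) ^ 2 - 2 * n + 1 with hMdef
  have hkeyR : ((d0 : ℝ) ^ 2 + (d1 : ℝ) ^ 2) ≤ (D : ℝ) ^ 2 * M := by
    rw [hMdef]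
    exact_mod_cast hkey
  have hS1R : (1 : ℝ) ≤ (d0 : ℝ) ^ 2 + (d1 : ℝ) ^ 2 := by exact_mod_cast hS1
  -- lower bound the distance to every point of the line
  have hne : (affineSpan ℝ ({p, q} : Set (EuclideanSpace ℝ (Fin 2))) :
      Set (EuclideanSpace ℝ (Fin 2))).Nonempty :=
    ⟨p, left_mem_affineSpan_pair ℝ p q⟩
  rw [ge_iff_le, ← not_lt]
  intro hlt
  rw [Metric.infDist_lt_iff hne] at hlt
  obtain ⟨y, hy, hylt⟩ := hlt
  obtain ⟨r, hr⟩ := hmem y hy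
  -- compute the distance
  have hdist : dist z y = Real.sqrt ((z 0 - y 0) ^ 2 + (z 1 - y 1) ^ 2) := by
    rw [EuclideanSpace.dist_eq, Fin.sum_univ_two, Real.dist_eq, Real.dist_eq, sq_abs, sq_abs]
  set u : ℝ := z 0 - y 0 with hudef
  set v : ℝ := z 1 - y 1 with hvdef
  have hu : u = (w0 : ℝ) - r * (d0 : ℝ) := by
    rw [hudef, hr 0, hc0, ha0, hb0]; push_cast [hw0def, hd0def]; ring
  have hv : v = (w1 : ℝ) - r * (d1 : ℝ) := by
    rw [hvdef, hr 1, hc1, ha1, hb1]; push_cast [hw1def, hd1def]; ring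
  have hDR : (D : ℝ) = (d0 : ℝ) * v - (d1 : ℝ) * u := by
    rw [hu, hv]; push_cast [hDdef]; ring
  have hCS : (D : ℝ) ^ 2 ≤ ((d0 : ℝ) ^ 2 + (d1 : ℝ) ^ 2) * (u ^ 2 + v ^ 2) := by
    rw [hDR]
    nlinarith [sq_nonneg ((d0 : ℝ) * u + (d1 : ℝ) * v)]
  have huv : 1 / M ≤ u ^ 2 + v ^ 2 := by
    rw [div_le_iff₀ hM]
    nlinarith [mul_le_mul_of_nonneg_right hCS hM.le, sq_nonneg (u ^ 2 + v ^ 2)]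
  have hfinal : (Real.sqrt M)⁻¹ ≤ dist z y := by
    rw [hdist, ← Real.sqrt_inv, ← one_div]
    exact Real.sqrt_le_sqrt huv
  rw [hMdef] at hfinal
  linarith
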